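/- Let ε > 0, m and T positive integers, and k ≥ 2 an integer. Let P, P₀, P₁, …, P_k be probability distributions on {−1,1}^m such that TV(P, P₀) ≤ ε and every point of {−1,1}^m has probability at least e^{−m} under P and under each P_i, 0 ≤ i ≤ k. Let X₁, …, X_T be i.i.d. samples from P, and let j ∈ {0,…,k} be any index maximizing the likelihood ∏_{t=1}^T P_j(X_t). Then with probability at least 1 − 2(k+1)/k² over the samples, TV(P, P_j) ≤ (4m²·ln(k)/T)^{1/4} + √(e^m·ε/2). -/

import Mathlib

open Finset Real
open scoped Classical

noncomputable section

/-- Total variation distance between two distributions on a finite type. -/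
def TVdist {Ω : Type*} [Fintype Ω] (P Q : Ω → ℝ) : ℝ := (1 / 2) * ∑ x, |P x - Q x|

/- ### Auxiliary lemmas -/

lemma sqrt_add_le' {x y : ℝ} (hx : 0 ≤ x) (hy : 0 ≤ y) :
    Real.sqrt (x + y) ≤ Real.sqrt x + Real.sqrt y := by
  have h : x + y ≤ (Real.sqrt x + Real.sqrt y) ^ 2 := by
    have hx' := Real.sq_sqrt hx
    have hy' := Real.sq_sqrt hy
    nlinarith [Real.sqrt_nonneg x, Real.sqrt_nonneg y]
  calc Real.sqrt (x + y) ≤ Real.sqrt ((Real.sqrt x + Real.sqrt y) ^ 2) := Real.sqrt_le_sqrt h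
    _ = Real.sqrt x + Real.sqrt y := Real.sqrt_sq (by positivity)

lemma exp_le_cosh_add {r u : ℝ} (hr : |r| ≤ 1) :
    Real.exp (r * u) ≤ Real.cosh u + r * Real.sinh u := by
  rw [abs_le] at hr
  have h := convexOn_exp.2 (Set.mem_univ (-u)) (Set.mem_univ u)
    (by linarith : (0:ℝ) ≤ (1 - r) / 2) (by linarith : (0:ℝ) ≤ (1 + r) / 2) (by ring)
  simp only [smul_eq_mul] at h
  have harg : (1 - r) / 2 * -u + (1 + r) / 2 * u = r * u := by ring
  rw [harg] at h
  rw [Real.cosh_eq, Real.sinh_eq]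
  calc Real.exp (r * u) ≤ (1 - r) / 2 * Real.exp (-u) + (1 + r) / 2 * Real.exp u := h
    _ = (Real.exp u + Real.exp (-u)) / 2 + r * ((Real.exp u - Real.exp (-u)) / 2) := by ring

lemma mgf_bound {Ω : Type*} [Fintype Ω] (p φ : Ω → ℝ) (μ c l : ℝ)
    (hp : ∀ x, 0 ≤ p x) (hsum : ∑ x, p x = 1) (hμ : ∑ x, p x * φ x = μ)
    (hφ : ∀ x, |φ x - μ| ≤ c) (hc : 0 < c) :
    ∑ x, p x * Real.exp (l * (φ x - μ)) ≤ Real.exp (l ^ 2 * c ^ 2 / 2) := by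
  have step : ∀ x, p x * Real.exp (l * (φ x - μ)) ≤
      p x * (Real.cosh (l * c) + ((φ x - μ) / c) * Real.sinh (l * c)) := by
    intro x
    apply mul_le_mul_of_nonneg_left _ (hp x)
    have hr : |(φ x - μ) / c| ≤ 1 := by
      rw [abs_div, abs_of_pos hc, div_le_one hc]; exact hφ x
    have := exp_le_cosh_add (u := l * c) hr
    have harg : (φ x - μ) / c * (l * c) = l * (φ x - μ) := by field_simp
    rwa [harg] at this
  calc ∑ x, p x * Real.exp (l * (φ x - μ))
      ≤ ∑ x, p x * (Real.cosh (l * c) + ((φ x - μ) / c) * Real.sinh (l * c)) :=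
        Finset.sum_le_sum fun x _ => step x
    _ = Real.cosh (l * c) := by
        have expand : ∀ x : Ω, p x * (Real.cosh (l*c) + (φ x - μ)/c * Real.sinh (l*c)) =
            Real.cosh (l*c) * p x + Real.sinh (l*c)/c * (p x * φ x)
              - Real.sinh (l*c)/c * μ * p x := fun x => by ring
        simp only [expand, Finset.sum_sub_distrib, Finset.sum_add_distrib, ← Finset.mul_sum,
          hsum, hμ]
        ring
    _ ≤ Real.exp (l ^ 2 * c ^ 2 / 2) := by
        calc Real.cosh (l * c) ≤ Real.exp ((l * c) ^ 2 / 2) := Real.cosh_le_exp_half_sq _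
          _ = Real.exp (l ^ 2 * c ^ 2 / 2) := by ring_nf

lemma chernoff {Ω : Type*} [Fintype Ω] (T : ℕ) (p φ : Ω → ℝ) (μ c s : ℝ)
    (hp : ∀ x, 0 ≤ p x) (hsum : ∑ x, p x = 1) (hμ : ∑ x, p x * φ x = μ)
    (hφ : ∀ x, |φ x - μ| ≤ c) (hc : 0 < c) (hs : 0 < s) :
    ∑ xs ∈ Finset.univ.filter (fun xs : Fin T → Ω => (T:ℝ)*(μ + s) ≤ ∑ t, φ (xs t)),
      ∏ t, p (xs t) ≤ Real.exp (-((T:ℝ) * s^2 / (2*c^2))) := by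
  classical
  set l : ℝ := s / c^2 with hl
  have hl0 : 0 < l := div_pos hs (by positivity)
  set g : Ω → ℝ := fun x => p x * Real.exp (l * (φ x - μ)) with hg
  have hg0 : ∀ x, 0 ≤ g x := fun x => mul_nonneg (hp x) (Real.exp_nonneg _)
  have keyterm : ∀ xs : Fin T → Ω,
      ∏ t, g (xs t) = (∏ t, p (xs t)) * Real.exp (l * ((∑ t, φ (xs t)) - (T:ℝ)*μ)) := by
    intro xs
    rw [Finset.prod_mul_distrib, ← Real.exp_sum, ← Finset.mul_sum, Finset.sum_sub_distrib,
      Finset.sum_const, Finset.card_univ, Fintype.card_fin, nsmul_eq_mul]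
  have key1 : ∀ xs ∈ Finset.univ.filter
        (fun xs : Fin T → Ω => (T:ℝ)*(μ + s) ≤ ∑ t, φ (xs t)),
      ∏ t, p (xs t) ≤ Real.exp (-(l*((T:ℝ)*s))) * ∏ t, g (xs t) := by
    intro xs hxs
    rw [Finset.mem_filter] at hxs
    rw [keyterm, ← mul_assoc, mul_comm (Real.exp _) (∏ t, p (xs t)), mul_assoc,
      ← Real.exp_add]
    have harg : 0 ≤ -(l*((T:ℝ)*s)) + l * ((∑ t, φ (xs t)) - (T:ℝ)*μ) := by
      have h2 := hxs.2
      nlinarith [hl0.le]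
    nth_rewrite 1 [← mul_one (∏ t, p (xs t))]
    exact mul_le_mul_of_nonneg_left (Real.one_le_exp harg)
      (Finset.prod_nonneg fun t _ => hp (xs t))
  have key2 : ∑ xs ∈ Finset.univ.filter
        (fun xs : Fin T → Ω => (T:ℝ)*(μ + s) ≤ ∑ t, φ (xs t)), ∏ t, p (xs t)
      ≤ ∑ xs : Fin T → Ω, Real.exp (-(l*((T:ℝ)*s))) * ∏ t, g (xs t) := by
    refine le_trans (Finset.sum_le_sum key1) ?_
    refine Finset.sum_le_sum_of_subset_of_nonneg (Finset.filter_subset _ _) ?_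
    intro xs _ _
    exact mul_nonneg (Real.exp_nonneg _) (Finset.prod_nonneg fun t _ => hg0 (xs t))
  have key3 : ∑ xs : Fin T → Ω, ∏ t, g (xs t) = (∑ x, g x) ^ T := by
    rw [← Fintype.piFinset_univ, ← Finset.prod_univ_sum, Finset.prod_const,
      Finset.card_univ, Fintype.card_fin]
  have hmgf := mgf_bound p φ μ c l hp hsum hμ hφ hc
  calc ∑ xs ∈ Finset.univ.filter
        (fun xs : Fin T → Ω => (T:ℝ)*(μ + s) ≤ ∑ t, φ (xs t)), ∏ t, p (xs t)
      ≤ Real.exp (-(l*((T:ℝ)*s))) * (∑ x, g x) ^ T := by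
        rw [← Finset.mul_sum] at key2; rw [← key3]; exact key2
    _ ≤ Real.exp (-(l*((T:ℝ)*s))) * (Real.exp (l ^ 2 * c ^ 2 / 2)) ^ T := by
        refine mul_le_mul_of_nonneg_left ?_ (Real.exp_nonneg _)
        exact pow_le_pow_left₀ (Finset.sum_nonneg fun x _ => hg0 x) hmgf T
    _ = Real.exp (-((T:ℝ) * s^2 / (2*c^2))) := by
        rw [← Real.exp_nat_mul, ← Real.exp_add]
        congr 1
        have hc' : c ≠ 0 := hc.ne'
        rw [hl]; field_simp; ring

lemma log_sum_ineq {Ω : Type*} (s : Finset Ω) (p q : Ω → ℝ)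
    (hp : ∀ x ∈ s, 0 ≤ p x) (hq : ∀ x ∈ s, 0 < q x) :
    (∑ x ∈ s, p x) * Real.log ((∑ x ∈ s, p x) / (∑ x ∈ s, q x)) ≤
      ∑ x ∈ s, p x * Real.log (p x / q x) := by
  classical
  rcases s.eq_empty_or_nonempty with rfl | hs
  · simp
  set a := ∑ x ∈ s, p x with ha
  set b := ∑ x ∈ s, q x with hb
  have hb0 : 0 < b := Finset.sum_pos hq hs
  have jensen := Real.convexOn_mul_log.map_sum_le (t := s)
    (w := fun x => q x / b) (p := fun x => p x / q x)
    (fun x hx => div_nonneg (hq x hx).le hb0.le)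
    (by rw [← Finset.sum_div]; exact div_self hb0.ne')
    (fun x hx => Set.mem_Ici.mpr (div_nonneg (hp x hx) (hq x hx).le))
  simp only [smul_eq_mul] at jensen
  have harg : ∑ x ∈ s, q x / b * (p x / q x) = a / b := by
    rw [Finset.sum_congr rfl (fun x hx => ?_), ← Finset.sum_div]
    field_simp [(hq x hx).ne']
  rw [harg] at jensen
  have hterm : ∀ x ∈ s, q x / b * (p x / q x * Real.log (p x / q x)) =
      (p x * Real.log (p x / q x)) / b := by
    intro x hx
    field_simp [(hq x hx).ne', hb0.ne']
  rw [Finset.sum_congr rfl hterm, ← Finset.sum_div] at jensen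
  have h2 := mul_le_mul_of_nonneg_left jensen hb0.le
  rw [mul_div_cancel₀ _ hb0.ne'] at h2
  have h3 : b * (a / b * Real.log (a / b)) = a * Real.log (a / b) := by
    field_simp
  linarith

lemma binary_pinsker {a b : ℝ} (hb : 0 < b) (hba : b ≤ a) (ha : a < 1) :
    2 * (a - b)^2 ≤ a * Real.log (a / b) + (1 - a) * Real.log ((1 - a) / (1 - b)) := by
  have ha0 : 0 < a := lt_of_lt_of_le hb hba
  have hb1 : b < 1 := lt_of_le_of_lt hba ha
  set g : ℝ → ℝ := fun x => a * (Real.log a - Real.log x)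
      + (1 - a) * (Real.log (1 - a) - Real.log (1 - x)) - 2 * (a - x)^2 with hgdef
  have hderiv : ∀ x : ℝ, 0 < x → x < 1 →
      HasDerivAt g (a * (-x⁻¹) + (1 - a) * (-((1 - x)⁻¹ * (-1))) - 2 * (2 * (a - x) ^ 1 * (-1))) x := by
    intro x hx0 hx1
    have h1 : HasDerivAt (fun x : ℝ => a * (Real.log a - Real.log x)) (a * (-x⁻¹)) x :=
      ((Real.hasDerivAt_log hx0.ne').const_sub (Real.log a)).const_mul a
    have hinner : HasDerivAt (fun x : ℝ => 1 - x) (-1 : ℝ) x := by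
      simpa using (hasDerivAt_id x).const_sub 1
    have hlog2 : HasDerivAt (fun x : ℝ => Real.log (1 - x)) ((1 - x)⁻¹ * (-1)) x :=
      (Real.hasDerivAt_log (by linarith : (1:ℝ) - x ≠ 0)).comp x hinner
    have h2 : HasDerivAt (fun x : ℝ => (1 - a) * (Real.log (1 - a) - Real.log (1 - x)))
        ((1 - a) * (-((1 - x)⁻¹ * (-1)))) x :=
      (hlog2.const_sub (Real.log (1 - a))).const_mul (1 - a)
    have h3 : HasDerivAt (fun x : ℝ => 2 * (a - x)^2) (2 * (2 * (a - x) ^ 1 * (-1))) x := by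
      have : HasDerivAt (fun x : ℝ => (a - x)^2) (2 * (a - x) ^ 1 * (-1)) x := by
        have hax : HasDerivAt (fun x : ℝ => a - x) (-1 : ℝ) x := by
          simpa using (hasDerivAt_id x).const_sub a
        simpa using hax.fun_pow 2
      exact this.const_mul 2
    exact (h1.add h2).sub h3
  have hanti : AntitoneOn g (Set.Icc b a) := by
    apply antitoneOn_of_deriv_nonpos (convex_Icc b a)
    · intro x hx
      have hx0 : 0 < x := lt_of_lt_of_le hb hx.1
      have hx1 : x < 1 := lt_of_le_of_lt hx.2 ha
      exact (hderiv x hx0 hx1).differentiableAt.continuousAt.continuousWithinAt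
    · intro x hx
      rw [interior_Icc] at hx
      have hx0 : 0 < x := lt_trans hb hx.1
      have hx1 : x < 1 := lt_trans hx.2 ha
      exact (hderiv x hx0 hx1).differentiableAt.differentiableWithinAt
    · intro x hx
      rw [interior_Icc] at hx
      have hx0 : 0 < x := lt_trans hb hx.1
      have hx1 : x < 1 := lt_trans hx.2 ha
      rw [(hderiv x hx0 hx1).deriv]
      have hxa : x < a := hx.2
      have hprod : (a * (-x⁻¹) + (1 - a) * (-((1 - x)⁻¹ * (-1))) - 2 * (2 * (a - x) ^ 1 * (-1)))
          * (x * (1 - x)) = (a - x) * (4 * x * (1 - x) - 1) := by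
        have h1x : (1:ℝ) - x ≠ 0 := by linarith
        field_simp [hx0.ne', h1x]
        ring
      have hpos : 0 < x * (1 - x) := by nlinarith
      have hle : (a - x) * (4 * x * (1 - x) - 1) ≤ 0 := by nlinarith [sq_nonneg (2*x - 1)]
      by_contra hcon
      push_neg at hcon
      nlinarith
  have hga : g a = 0 := by simp [hgdef]
  have hgb := hanti (Set.mem_Icc.mpr ⟨le_refl b, hba⟩) (Set.mem_Icc.mpr ⟨hba, le_refl a⟩) hba
  rw [hga] at hgb
  have hlog1 : Real.log (a / b) = Real.log a - Real.log b := Real.log_div ha0.ne' hb.ne'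
  have hlog2 : Real.log ((1 - a) / (1 - b)) = Real.log (1 - a) - Real.log (1 - b) :=
    Real.log_div (by linarith) (by linarith)
  rw [hlog1, hlog2]
  simp only [hgdef] at hgb
  linarith

lemma pinsker {Ω : Type*} [Fintype Ω] (P Q : Ω → ℝ)
    (hP : ∀ x, 0 < P x) (hQ : ∀ x, 0 < Q x)
    (hPs : ∑ x, P x = 1) (hQs : ∑ x, Q x = 1) :
    TVdist P Q ≤ Real.sqrt ((∑ x, P x * Real.log (P x / Q x)) / 2) := by
  classical
  set A := Finset.univ.filter (fun x : Ω => Q x ≤ P x) with hA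
  set B := Finset.univ.filter (fun x : Ω => ¬ Q x ≤ P x) with hB
  have hsplit : ∀ f : Ω → ℝ, ∑ x ∈ A, f x + ∑ x ∈ B, f x = ∑ x, f x := fun f =>
    Finset.sum_filter_add_sum_filter_not _ _ f
  set a := ∑ x ∈ A, P x with haa
  set b := ∑ x ∈ A, Q x with hbb
  have hPB : ∑ x ∈ B, P x = 1 - a := by
    have := hsplit P; rw [hPs] at this; linarith
  have hQB : ∑ x ∈ B, Q x = 1 - b := by
    have := hsplit Q; rw [hQs] at this; linarith
  have hTV : TVdist P Q = a - b := by
    unfold TVdist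
    rw [← hsplit (fun x => |P x - Q x|)]
    have h1 : ∑ x ∈ A, |P x - Q x| = a - b := by
      rw [haa, hbb, ← Finset.sum_sub_distrib]
      apply Finset.sum_congr rfl
      intro x hx
      rw [hA, Finset.mem_filter] at hx
      exact abs_of_nonneg (by linarith [hx.2])
    have h2 : ∑ x ∈ B, |P x - Q x| = (1 - b) - (1 - a) := by
      rw [← hPB, ← hQB, ← Finset.sum_sub_distrib]
      apply Finset.sum_congr rfl
      intro x hx
      rw [hB, Finset.mem_filter] at hx
      push_neg at hx
      rw [abs_of_neg (by linarith [hx.2])]; ring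
    rw [h1, h2]; ring
  rcases Finset.eq_empty_or_nonempty B with hBe | hBne
  · have hQP : ∀ x, Q x ≤ P x := by
      intro x
      by_contra hcon
      have : x ∈ B := by rw [hB, Finset.mem_filter]; exact ⟨Finset.mem_univ x, hcon⟩
      simp [hBe] at this
    have hzero : ∑ x, (P x - Q x) = 0 := by
      rw [Finset.sum_sub_distrib, hPs, hQs]; ring
    have heq : ∀ x ∈ (Finset.univ : Finset Ω), P x - Q x = 0 := by
      rw [← Finset.sum_eq_zero_iff_of_nonneg (fun x _ => by linarith [hQP x])]
      exact hzero
    have hTV0 : TVdist P Q = 0 := by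
      unfold TVdist
      rw [Finset.sum_congr rfl (fun x hx => by rw [heq x hx, abs_zero])]
      simp
    rw [hTV0]
    exact Real.sqrt_nonneg _
  rcases Finset.eq_empty_or_nonempty A with hAe | hAne
  · exfalso
    have hPQ : ∀ x, P x < Q x := by
      intro x
      by_contra hcon
      push_neg at hcon
      have : x ∈ A := by rw [hA, Finset.mem_filter]; exact ⟨Finset.mem_univ x, hcon⟩
      simp [hAe] at this
    have huniv : (Finset.univ : Finset Ω).Nonempty := by
      rcases Finset.eq_empty_or_nonempty (Finset.univ : Finset Ω) with h | h
      · rw [Finset.sum_congr h (fun x hx => rfl)] at hPs; simp at hPs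
      · exact h
    have := Finset.sum_lt_sum_of_nonempty huniv (fun x _ => hPQ x)
    rw [hPs, hQs] at this
    exact lt_irrefl 1 this
  have hb0 : 0 < b := Finset.sum_pos (fun x hx => hQ x) hAne
  have hba : b ≤ a := by
    apply Finset.sum_le_sum
    intro x hx
    rw [hA, Finset.mem_filter] at hx
    exact hx.2
  have ha1 : a < 1 := by
    have : 0 < ∑ x ∈ B, P x := Finset.sum_pos (fun x _ => hP x) hBne
    rw [hPB] at this; linarith
  have hbinary := binary_pinsker hb0 hba ha1
  have hSA := log_sum_ineq A P Q (fun x _ => (hP x).le) (fun x _ => hQ x)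
  have hSB := log_sum_ineq B P Q (fun x _ => (hP x).le) (fun x _ => hQ x)
  rw [hPB, hQB] at hSB
  have hKL : a * Real.log (a / b) + (1 - a) * Real.log ((1 - a) / (1 - b)) ≤
      ∑ x, P x * Real.log (P x / Q x) := by
    rw [← hsplit (fun x => P x * Real.log (P x / Q x))]
    exact add_le_add hSA hSB
  have hTVnn : 0 ≤ a - b := by linarith
  rw [hTV]
  rw [← Real.sqrt_sq hTVnn]
  apply Real.sqrt_le_sqrt
  nlinarith

lemma TVdist_nonneg {Ω : Type*} [Fintype Ω] (P Q : Ω → ℝ) : 0 ≤ TVdist P Q := by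
  unfold TVdist
  positivity

lemma abs_sub_le_TVdist {Ω : Type*} [Fintype Ω] (P Q : Ω → ℝ)
    (hPs : ∑ x, P x = 1) (hQs : ∑ x, Q x = 1) (x : Ω) : |P x - Q x| ≤ TVdist P Q := by
  classical
  have hzero : ∑ y, (P y - Q y) = 0 := by rw [Finset.sum_sub_distrib, hPs, hQs]; ring
  have herase : ∑ y ∈ Finset.univ.erase x, (P y - Q y) = -(P x - Q x) := by
    rw [Finset.sum_erase_eq_sub (Finset.mem_univ x), hzero]; ring
  have h1 : |P x - Q x| ≤ ∑ y ∈ Finset.univ.erase x, |P y - Q y| := by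
    calc |P x - Q x| = |∑ y ∈ Finset.univ.erase x, (P y - Q y)| := by rw [herase, abs_neg]
      _ ≤ ∑ y ∈ Finset.univ.erase x, |P y - Q y| := Finset.abs_sum_le_sum_abs _ _
  have h2 : ∑ y, |P y - Q y| = |P x - Q x| + ∑ y ∈ Finset.univ.erase x, |P y - Q y| :=
    (Finset.add_sum_erase _ _ (Finset.mem_univ x)).symm
  unfold TVdist
  linarith

lemma kl_le_inv_mul_TV {Ω : Type*} [Fintype Ω] (P Q : Ω → ℝ) (β : ℝ) (hβ : 0 < β)
    (hP : ∀ x, 0 < P x) (hQlb : ∀ x, β ≤ Q x)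
    (hPs : ∑ x, P x = 1) (hQs : ∑ x, Q x = 1) :
    ∑ x, P x * Real.log (P x / Q x) ≤ β⁻¹ * TVdist P Q := by
  have hTVnn := TVdist_nonneg P Q
  have hterm : ∀ x, P x * Real.log (P x / Q x) ≤ P x * (β⁻¹ * TVdist P Q) := by
    intro x
    have hQx : 0 < Q x := lt_of_lt_of_le hβ (hQlb x)
    apply mul_le_mul_of_nonneg_left _ (hP x).le
    have hlog : Real.log (P x / Q x) ≤ P x / Q x - 1 :=
      Real.log_le_sub_one_of_pos (div_pos (hP x) hQx)
    have he : P x / Q x - 1 = (P x - Q x) / Q x := by field_simp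
    have habs : (P x - Q x) / Q x ≤ |P x - Q x| * (Q x)⁻¹ := by
      rw [div_eq_mul_inv]
      exact mul_le_mul_of_nonneg_right (le_abs_self _) (inv_nonneg.mpr hQx.le)
    have hfinal : |P x - Q x| * (Q x)⁻¹ ≤ TVdist P Q * β⁻¹ := by
      apply mul_le_mul (abs_sub_le_TVdist P Q hPs hQs x)
        (inv_anti₀ hβ (hQlb x)) (inv_nonneg.mpr hQx.le) hTVnn
    calc Real.log (P x / Q x) ≤ P x / Q x - 1 := hlog
      _ = (P x - Q x) / Q x := he
      _ ≤ |P x - Q x| * (Q x)⁻¹ := habs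
      _ ≤ TVdist P Q * β⁻¹ := hfinal
      _ = β⁻¹ * TVdist P Q := mul_comm _ _
  calc ∑ x, P x * Real.log (P x / Q x) ≤ ∑ x, P x * (β⁻¹ * TVdist P Q) :=
        Finset.sum_le_sum fun x _ => hterm x
    _ = β⁻¹ * TVdist P Q := by rw [← Finset.sum_mul, hPs, one_mul]

/-- Maximum-likelihood selection: if `TV(P, Q 0) ≤ ε` and all the distributions
`P, Q 0, …, Q k` put mass at least `e^{-m}` on every point, then with probability at least
`1 - 2(k+1)/k²` over `T` i.i.d. samples from `P`, every index `j` maximizing the likelihood of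
the samples satisfies `TV(P, Q j) ≤ (4m² ln k / T)^{1/4} + √(e^m ε / 2)`. -/
theorem stmt14 (ε : ℝ) (hε : 0 < ε) (m T k : ℕ) (hm : 0 < m) (hT : 0 < T) (hk : 2 ≤ k)
    (P : (Fin m → Bool) → ℝ) (Q : Fin (k + 1) → (Fin m → Bool) → ℝ)
    (hPpos : ∀ x, Real.exp (-(m : ℝ)) ≤ P x) (hPsum : ∑ x, P x = 1)
    (hQpos : ∀ i x, Real.exp (-(m : ℝ)) ≤ Q i x) (hQsum : ∀ i, ∑ x, Q i x = 1)
    (hTV0 : TVdist P (Q 0) ≤ ε) :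
    1 - 2 * (k + 1) / (k : ℝ) ^ 2 ≤
      ∑ xs ∈ Finset.univ.filter (fun xs : Fin T → (Fin m → Bool) =>
          ∀ j : Fin (k + 1),
            (∀ i : Fin (k + 1), ∏ t, Q i (xs t) ≤ ∏ t, Q j (xs t)) →
              TVdist P (Q j) ≤
                (4 * (m : ℝ) ^ 2 * Real.log k / T) ^ ((1 : ℝ) / 4) +
                  Real.sqrt (Real.exp m * ε / 2)),
        ∏ t, P (xs t) := by
  classical
  have hP0 : ∀ x, 0 < P x := fun x => lt_of_lt_of_le (Real.exp_pos _) (hPpos x)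
  have hQ0 : ∀ i x, 0 < Q i x := fun i x => lt_of_lt_of_le (Real.exp_pos _) (hQpos i x)
  have hQ1 : ∀ i x, Q i x ≤ 1 := by
    intro i x
    calc Q i x ≤ ∑ y, Q i y :=
          Finset.single_le_sum (fun y _ => (hQ0 i y).le) (Finset.mem_univ x)
      _ = 1 := hQsum i
  set φ : Fin (k+1) → (Fin m → Bool) → ℝ := fun i x => Real.log (Q i x) with hφdef
  set μ : Fin (k+1) → ℝ := fun i => ∑ x, P x * φ i x with hμdef
  have hφlb : ∀ i x, -(m:ℝ) ≤ φ i x := by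
    intro i x
    have := Real.log_le_log (Real.exp_pos _) (hQpos i x)
    rwa [Real.log_exp] at this
  have hφub : ∀ i x, φ i x ≤ 0 := fun i x => Real.log_nonpos (hQ0 i x).le (hQ1 i x)
  have hμlb : ∀ i, -(m:ℝ) ≤ μ i := by
    intro i
    calc -(m:ℝ) = ∑ x, P x * -(m:ℝ) := by rw [← Finset.sum_mul, hPsum, one_mul]
      _ ≤ μ i := Finset.sum_le_sum fun x _ =>
          mul_le_mul_of_nonneg_left (hφlb i x) (hP0 x).le
  have hμub : ∀ i, μ i ≤ 0 := by
    intro i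
    apply Finset.sum_nonpos
    intro x _
    have := mul_le_mul_of_nonneg_left (hφub i x) (hP0 x).le
    simpa using this
  have hφabs : ∀ i x, |φ i x - μ i| ≤ (m:ℝ) := fun i x =>
    abs_le.mpr ⟨by linarith [hφlb i x, hμub i], by linarith [hφub i x, hμlb i]⟩
  have hm0 : (0:ℝ) < m := by exact_mod_cast hm
  have hT0 : (0:ℝ) < T := by exact_mod_cast hT
  have hk1 : (1:ℝ) < k := by exact_mod_cast lt_of_lt_of_le one_lt_two hk
  have hlogk : 0 < Real.log k := Real.log_pos hk1
  set X : ℝ := 4 * (m : ℝ) ^ 2 * Real.log k / T with hXdef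
  have hX0 : 0 < X := by positivity
  set s : ℝ := Real.sqrt X with hsdef
  have hs0 : 0 < s := Real.sqrt_pos.mpr hX0
  have hs2 : s^2 = X := Real.sq_sqrt hX0.le
  have hexp : Real.exp (-((T:ℝ) * s^2 / (2*(m:ℝ)^2))) = ((k:ℝ)^2)⁻¹ := by
    have harg : (T:ℝ) * s^2 / (2*(m:ℝ)^2) = Real.log ((k:ℝ)^2) := by
      rw [hs2, hXdef, Real.log_pow]
      push_cast
      field_simp
      ring
    rw [harg, Real.exp_neg, Real.exp_log (by positivity)]
  have hUp : ∀ i, ∑ xs ∈ Finset.univ.filter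
        (fun xs : Fin T → (Fin m → Bool) => (T:ℝ)*(μ i + s) ≤ ∑ t, φ i (xs t)),
      ∏ t, P (xs t) ≤ ((k:ℝ)^2)⁻¹ := by
    intro i
    rw [← hexp]
    exact chernoff T P (φ i) (μ i) m s (fun x => (hP0 x).le) hPsum rfl (hφabs i) hm0 hs0
  have hLo : ∀ i, ∑ xs ∈ Finset.univ.filter
        (fun xs : Fin T → (Fin m → Bool) => (T:ℝ)*(-μ i + s) ≤ ∑ t, -φ i (xs t)),
      ∏ t, P (xs t) ≤ ((k:ℝ)^2)⁻¹ := by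
    intro i
    rw [← hexp]
    refine chernoff T P (fun x => -φ i x) (-μ i) m s (fun x => (hP0 x).le) hPsum ?_ ?_ hm0 hs0
    · rw [hμdef]
      simp [mul_neg, Finset.sum_neg_distrib]
    · intro x
      rw [show -φ i x - -μ i = -(φ i x - μ i) by ring, abs_neg]
      exact hφabs i x
  have htotal : ∑ xs : Fin T → (Fin m → Bool), ∏ t, P (xs t) = 1 := by
    rw [← Fintype.piFinset_univ, ← Finset.prod_univ_sum]
    simp [hPsum]
  have hbadsub : ∀ xs : Fin T → (Fin m → Bool),
      (¬ ∀ i, |(∑ t, φ i (xs t)) - (T:ℝ) * μ i| ≤ (T:ℝ) * s) →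
      ∃ i, ((T:ℝ)*(μ i + s) ≤ ∑ t, φ i (xs t)) ∨
        ((T:ℝ)*(-μ i + s) ≤ ∑ t, -φ i (xs t)) := by
    intro xs h
    push_neg at h
    obtain ⟨i, hi⟩ := h
    refine ⟨i, ?_⟩
    rw [lt_abs] at hi
    rcases hi with h1 | h1
    · left; nlinarith
    · right
      rw [Finset.sum_neg_distrib]
      nlinarith
  have hnotGood : ∑ xs ∈ Finset.univ.filter
        (fun xs : Fin T → (Fin m → Bool) =>
          ¬ ∀ i, |(∑ t, φ i (xs t)) - (T:ℝ) * μ i| ≤ (T:ℝ) * s),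
      ∏ t, P (xs t) ≤ ((k:ℝ)+1) * (2 * ((k:ℝ)^2)⁻¹) := by
    have hpnn : ∀ xs : Fin T → (Fin m → Bool), 0 ≤ ∏ t, P (xs t) :=
      fun xs => Finset.prod_nonneg fun t _ => (hP0 (xs t)).le
    have hpointwise : ∀ xs ∈ Finset.univ.filter
          (fun xs : Fin T → (Fin m → Bool) =>
            ¬ ∀ i, |(∑ t, φ i (xs t)) - (T:ℝ) * μ i| ≤ (T:ℝ) * s),
        ∏ t, P (xs t) ≤ ∑ i : Fin (k+1),
          ((if (T:ℝ)*(μ i + s) ≤ ∑ t, φ i (xs t) then ∏ t, P (xs t) else 0)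
            + (if (T:ℝ)*(-μ i + s) ≤ ∑ t, -φ i (xs t) then ∏ t, P (xs t) else 0)) := by
      intro xs hxs
      rw [Finset.mem_filter] at hxs
      obtain ⟨i₀, hi₀⟩ := hbadsub xs hxs.2
      have hnn : ∀ i ∈ (Finset.univ : Finset (Fin (k+1))), (0:ℝ) ≤
          ((if (T:ℝ)*(μ i + s) ≤ ∑ t, φ i (xs t) then ∏ t, P (xs t) else 0)
            + (if (T:ℝ)*(-μ i + s) ≤ ∑ t, -φ i (xs t) then ∏ t, P (xs t) else 0)) := by
        intro i _
        apply add_nonneg <;> · split_ifs <;> simp [hpnn xs]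
      refine le_trans ?_ (Finset.single_le_sum hnn (Finset.mem_univ i₀))
      rcases hi₀ with h | h
      · rw [if_pos h]
        have : (0:ℝ) ≤ (if (T:ℝ)*(-μ i₀ + s) ≤ ∑ t, -φ i₀ (xs t) then ∏ t, P (xs t) else 0) := by
          split_ifs <;> simp [hpnn xs]
        linarith
      · rw [if_pos h]
        have : (0:ℝ) ≤ (if (T:ℝ)*(μ i₀ + s) ≤ ∑ t, φ i₀ (xs t) then ∏ t, P (xs t) else 0) := by
          split_ifs <;> simp [hpnn xs]
        linarith
    calc ∑ xs ∈ Finset.univ.filter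
          (fun xs : Fin T → (Fin m → Bool) =>
            ¬ ∀ i, |(∑ t, φ i (xs t)) - (T:ℝ) * μ i| ≤ (T:ℝ) * s), ∏ t, P (xs t)
        ≤ ∑ xs ∈ Finset.univ.filter
          (fun xs : Fin T → (Fin m → Bool) =>
            ¬ ∀ i, |(∑ t, φ i (xs t)) - (T:ℝ) * μ i| ≤ (T:ℝ) * s),
          ∑ i : Fin (k+1),
          ((if (T:ℝ)*(μ i + s) ≤ ∑ t, φ i (xs t) then ∏ t, P (xs t) else 0)
            + (if (T:ℝ)*(-μ i + s) ≤ ∑ t, -φ i (xs t) then ∏ t, P (xs t) else 0)) :=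
          Finset.sum_le_sum hpointwise
      _ ≤ ∑ xs : Fin T → (Fin m → Bool), ∑ i : Fin (k+1),
          ((if (T:ℝ)*(μ i + s) ≤ ∑ t, φ i (xs t) then ∏ t, P (xs t) else 0)
            + (if (T:ℝ)*(-μ i + s) ≤ ∑ t, -φ i (xs t) then ∏ t, P (xs t) else 0)) := by
          apply Finset.sum_le_sum_of_subset_of_nonneg (Finset.filter_subset _ _)
          intro xs _ _
          apply Finset.sum_nonneg
          intro i _
          apply add_nonneg <;> · split_ifs <;>
            simp [Finset.prod_nonneg fun t _ => (hP0 (xs t)).le]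
      _ = ∑ i : Fin (k+1), (∑ xs ∈ Finset.univ.filter
            (fun xs : Fin T → (Fin m → Bool) => (T:ℝ)*(μ i + s) ≤ ∑ t, φ i (xs t)),
            ∏ t, P (xs t)
          + ∑ xs ∈ Finset.univ.filter
            (fun xs : Fin T → (Fin m → Bool) => (T:ℝ)*(-μ i + s) ≤ ∑ t, -φ i (xs t)),
            ∏ t, P (xs t)) := by
          rw [Finset.sum_comm]
          apply Finset.sum_congr rfl
          intro i _
          rw [Finset.sum_add_distrib, Finset.sum_filter, Finset.sum_filter]
      _ ≤ ∑ _i : Fin (k+1), (((k:ℝ)^2)⁻¹ + ((k:ℝ)^2)⁻¹) :=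
          Finset.sum_le_sum fun i _ => add_le_add (hUp i) (hLo i)
      _ = ((k:ℝ)+1) * (2 * ((k:ℝ)^2)⁻¹) := by
          rw [Finset.sum_const, Finset.card_univ, Fintype.card_fin, nsmul_eq_mul]
          push_cast
          ring
  have hGoodLB : 1 - 2 * ((k:ℝ) + 1) / (k : ℝ) ^ 2 ≤ ∑ xs ∈ Finset.univ.filter
        (fun xs : Fin T → (Fin m → Bool) =>
          ∀ i, |(∑ t, φ i (xs t)) - (T:ℝ) * μ i| ≤ (T:ℝ) * s),
      ∏ t, P (xs t) := by
    have hsplit := Finset.sum_filter_add_sum_filter_not Finset.univ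
      (fun xs : Fin T → (Fin m → Bool) =>
        ∀ i, |(∑ t, φ i (xs t)) - (T:ℝ) * μ i| ≤ (T:ℝ) * s)
      (fun xs => ∏ t, P (xs t))
    rw [htotal] at hsplit
    have hkk : ((k:ℝ)+1) * (2 * ((k:ℝ)^2)⁻¹) = 2 * ((k:ℝ) + 1) / (k : ℝ) ^ 2 := by
      field_simp
    linarith [hnotGood]
  refine le_trans (by exact_mod_cast hGoodLB) ?_
  apply Finset.sum_le_sum_of_subset_of_nonneg
  · intro xs hxs
    rw [Finset.mem_filter] at hxs
    have hgood := hxs.2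
    rw [Finset.mem_filter]
    refine ⟨Finset.mem_univ xs, ?_⟩
    intro j hmax
    have hlogprod : ∀ i, Real.log (∏ t, Q i (xs t)) = ∑ t, φ i (xs t) := fun i =>
      Real.log_prod (fun t _ => (hQ0 i (xs t)).ne')
    have hL : ∑ t, φ 0 (xs t) ≤ ∑ t, φ j (xs t) := by
      rw [← hlogprod 0, ← hlogprod j]
      exact Real.log_le_log (Finset.prod_pos fun t _ => hQ0 0 (xs t)) (hmax 0)
    have h0 := abs_le.mp (hgood 0)
    have hj := abs_le.mp (hgood j)
    have hμj : μ 0 - 2*s ≤ μ j := by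
      have h1 : (T:ℝ) * (μ 0 - 2*s) ≤ (T:ℝ) * μ j := by nlinarith [h0.1, h0.2, hj.1, hj.2, hL]
      exact le_of_mul_le_mul_left h1 hT0
    have hKLdecomp : ∀ i, ∑ x, P x * Real.log (P x / Q i x) =
        (∑ x, P x * Real.log (P x)) - μ i := by
      intro i
      rw [hμdef]
      rw [← Finset.sum_sub_distrib]
      apply Finset.sum_congr rfl
      intro x _
      rw [Real.log_div (hP0 x).ne' (hQ0 i x).ne']
      ring
    have hKL0 : ∑ x, P x * Real.log (P x / Q 0 x) ≤ Real.exp m * ε := by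
      have h := kl_le_inv_mul_TV P (Q 0) (Real.exp (-(m:ℝ))) (Real.exp_pos _) hP0
        (hQpos 0) hPsum (hQsum 0)
      rw [Real.exp_neg, inv_inv] at h
      calc ∑ x, P x * Real.log (P x / Q 0 x) ≤ Real.exp m * TVdist P (Q 0) := h
        _ ≤ Real.exp m * ε := mul_le_mul_of_nonneg_left hTV0 (Real.exp_pos _).le
    have hKLj : ∑ x, P x * Real.log (P x / Q j x) ≤ Real.exp m * ε + 2*s := by
      rw [hKLdecomp j]
      rw [hKLdecomp 0] at hKL0
      linarith
    have hpins := pinsker P (Q j) hP0 (hQ0 j) hPsum (hQsum j)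
    have hsq : Real.sqrt ((∑ x, P x * Real.log (P x / Q j x))/2) ≤
        Real.sqrt (Real.exp m * ε/2 + s) := Real.sqrt_le_sqrt (by linarith)
    have hsplit2 : Real.sqrt (Real.exp m * ε/2 + s) ≤
        Real.sqrt (Real.exp m * ε/2) + Real.sqrt s := sqrt_add_le' (by positivity) hs0.le
    have hqs : Real.sqrt s = X ^ ((1:ℝ)/4) := by
      rw [hsdef, Real.sqrt_eq_rpow, Real.sqrt_eq_rpow, ← Real.rpow_mul hX0.le]
      norm_num
    calc TVdist P (Q j) ≤ Real.sqrt ((∑ x, P x * Real.log (P x / Q j x))/2) := hpins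
      _ ≤ Real.sqrt (Real.exp m * ε/2 + s) := hsq
      _ ≤ Real.sqrt (Real.exp m * ε/2) + Real.sqrt s := hsplit2
      _ = X ^ ((1:ℝ)/4) + Real.sqrt (Real.exp m * ε / 2) := by
          rw [hqs]; ring_nf
  · intro xs _ _
    exact Finset.prod_nonneg fun t _ => (hP0 (xs t)).le
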